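/- Assume κ = κ^{<κ} is an infinite cardinal and o is an iterand satisfying the combinatorial clauses, such that every element of |TR_o| belongs to H(κ) (is hereditarily of cardinality < κ). Assume additionally that for every condition p = (tr_p, F_p) ∈ Q_o and every cardinal μ < κ there exists x ∈ |TR_o| with tr_p ≤_{TR_o} x, σ_o(x) > μ · |F_p|, and x ∈ A_{o,q} for every q ∈ F_p. Then for every cardinal μ < κ there exists a dense open subset D of (Q_o, ≤_{Q_o}) which can be written as D = ⋃_{ε<κ} Y_ε, where for each ε < κ every subset of Y_ε of cardinality < μ has a common upper bound in Q_o. (D is dense open: every condition has an extension in D, and any extension of a member of D lies in D.) -/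

import Mathlib

universe u

open Cardinal

/-- The data of a putative `κ`-trunk controller: a carrier with a binary relation and a
minimum element, a partial "least upper bound" operation `plus` on sequences of elements
indexed by sets of ordinals (with `plusDefined` recording its domain), and a set `S`
together with partial `{0,1}`-valued functions `val x : S → Option Bool`. -/
structure TrunkData (κ : Cardinal.{u}) : Type (u + 1) where
  Carrier : Type u
  le : Carrier → Carrier → Prop
  bot : Carrier
  plusDefined : ∀ s : Set Ordinal.{u}, (s → Carrier) → Prop
  plus : ∀ s : Set Ordinal.{u}, (s → Carrier) → Carrier
  S : Type u
  val : Carrier → S → Option Bool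

/-- `T` is a `κ`-trunk controller. -/
structure IsTrunkController (κ : Cardinal.{u}) (T : TrunkData.{u} κ) : Prop where
  le_refl : ∀ x, T.le x x
  le_trans : ∀ {x y z}, T.le x y → T.le y z → T.le x z
  le_antisymm : ∀ {x y}, T.le x y → T.le y x → x = y
  bot_le : ∀ x, T.le T.bot x
  /-- `plus` is only defined on sequences of length `< κ`. -/
  plusDefined_card_lt : ∀ (s : Set Ordinal.{u}) (f : s → T.Carrier),
    T.plusDefined s f → #s < Cardinal.lift.{u + 1} κ
  /-- whenever defined, the value of `plus` is an upper bound of the terms … -/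
  plus_upperBound : ∀ (s : Set Ordinal.{u}) (f : s → T.Carrier),
    T.plusDefined s f → ∀ i, T.le (f i) (T.plus s f)
  /-- … and is a least upper bound. -/
  plus_least : ∀ (s : Set Ordinal.{u}) (f : s → T.Carrier),
    T.plusDefined s f → ∀ x, (∀ i, T.le (f i) x) → T.le (T.plus s f) x
  /-- axiom (i): every increasing sequence of length `< κ` is in the domain of `plus`. -/
  increasing_plusDefined : ∀ (s : Set Ordinal.{u}) (f : s → T.Carrier),
    #s < Cardinal.lift.{u + 1} κ →
    (∀ i j : s, (i : Ordinal.{u}) ≤ (j : Ordinal.{u}) → T.le (f i) (f j)) →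
    T.plusDefined s f
  /-- axiom (ii): among `κ⁺` many `ζ`-tuples there are two which are pairwise
  in the domain of `plus`. -/
  pairing : ∀ ζ : Ordinal.{u}, ζ < κ.ord →
    ∀ x : Ordinal.{u} → Ordinal.{u} → T.Carrier,
      ∃ α β : Ordinal.{u}, α < β ∧ β < (Order.succ κ).ord ∧
        ∀ ε < ζ, T.plusDefined {α, β} fun γ => x (γ : Ordinal.{u}) ε
  val_mono : ∀ {x y}, T.le x y → ∀ s b, T.val x s = some b → T.val y s = some b

section Product

variable {κ : Cardinal.{u}} {I : Type u}

/-- The support of an element of the `<κ`-support product. -/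
def prodSupport (T : I → TrunkData.{u} κ) (f : (i : I) → Option ((T i).Carrier)) : Set I :=
  {i | f i ≠ none}

/-- Elements of the `<κ`-support product: partial choice functions with support of size `< κ`. -/
def ProdCarrier (T : I → TrunkData.{u} κ) : Type u :=
  { f : (i : I) → Option ((T i).Carrier) // #(prodSupport T f) < κ }

/-- The everywhere-undefined function, i.e. the function with empty domain. -/
def prodBot (T : I → TrunkData.{u} κ) (hκ : ℵ₀ ≤ κ) : ProdCarrier T :=
  ⟨fun _ => none, by
    have h : prodSupport T (fun _ => none) = ∅ := by ext i; simp [prodSupport]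
    rw [h]
    simpa using lt_of_lt_of_le Cardinal.aleph0_pos hκ⟩

/-- Given a sequence `F` of elements of the product and a coordinate `i`, the set of indices
`ε ∈ s` at which `F ε` is defined at `i`. -/
def idxSet (T : I → TrunkData.{u} κ) (s : Set Ordinal.{u}) (F : s → ProdCarrier T)
    (i : I) : Set Ordinal.{u} :=
  {ε | ∃ h : ε ∈ s, ((F ⟨ε, h⟩).1 i).isSome = true}

/-- The sequence of `i`-th coordinates of `F`. -/
noncomputable def idxFun (T : I → TrunkData.{u} κ) (s : Set Ordinal.{u})
    (F : s → ProdCarrier T) (i : I) : idxSet T s F i → (T i).Carrier := fun ε => by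
  have h : ∃ h : (ε : Ordinal.{u}) ∈ s, ((F ⟨ε, h⟩).1 i).isSome = true := ε.2
  exact ((F ⟨(ε : Ordinal.{u}), h.choose⟩).1 i).get h.choose_spec

/-- Definedness of `plus` in the product: the sequence has length `< κ` and at each coordinate
in the union of the supports, the coordinatewise `plus` is defined. -/
def prodPlusDefined (T : I → TrunkData.{u} κ) (s : Set Ordinal.{u})
    (F : s → ProdCarrier T) : Prop :=
  #s < Cardinal.lift.{u + 1} κ ∧ ∀ i : I, (idxSet T s F i).Nonempty →
    (T i).plusDefined (idxSet T s F i) (idxFun T s F i)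

open Classical in
/-- The value of `plus` in the product: computed coordinatewise on the union of the supports. -/
noncomputable def prodPlus (T : I → TrunkData.{u} κ) (hκ : ℵ₀ ≤ κ) (s : Set Ordinal.{u})
    (F : s → ProdCarrier T) : ProdCarrier T :=
  if h : #{i : I | (idxSet T s F i).Nonempty} < κ then
    ⟨fun i => if hi : (idxSet T s F i).Nonempty
        then some ((T i).plus (idxSet T s F i) (idxFun T s F i)) else none, by
      refine lt_of_le_of_lt (Cardinal.mk_le_mk_of_subset ?_) h
      intro i hi
      simp only [Set.mem_setOf_eq]
      by_contra hn
      apply hi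
      show (if hi : (idxSet T s F i).Nonempty
        then some ((T i).plus (idxSet T s F i) (idxFun T s F i)) else none) = none
      exact dif_neg hn⟩
  else prodBot T hκ

/-- The `<κ`-support product `∏^{<κ}_{i ∈ I} T i` of a family of trunk-controller data. -/
noncomputable def prodData (T : I → TrunkData.{u} κ) (hκ : ℵ₀ ≤ κ) : TrunkData.{u} κ where
  Carrier := ProdCarrier T
  le f g := ∀ (i : I) (x : (T i).Carrier), f.1 i = some x →
    ∃ y : (T i).Carrier, g.1 i = some y ∧ (T i).le x y
  bot := prodBot T hκ
  plusDefined := prodPlusDefined T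
  plus := prodPlus T hκ
  S := Σ i : I, (T i).S
  val f p :=
    match f.1 p.1 with
    | none => none
    | some x => (T p.1).val x p.2

end Product

/-- An iterand `o` satisfying the combinatorial clauses: a `κ`-trunk controller `TR`,
an atomic forcing (a quasi-order) `At` with trunk function `tr`, a nondecreasing cardinal
function `σ` with values in `[2, κ]`, sets `A p` of possible trunks of extensions,
and the two demands (F) and (G). -/
structure Iterand (κ : Cardinal.{u}) : Type (u + 1) where
  TR : TrunkData.{u} κ
  isTC : IsTrunkController κ TR
  /-- the atomic forcing `Q_o^at` … -/
  At : Type u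
  /-- … with its quasi-order. -/
  atLE : At → At → Prop
  atLE_refl : ∀ p, atLE p p
  atLE_trans : ∀ {p q r}, atLE p q → atLE q r → atLE p r
  /-- the trunk of an atomic condition. -/
  tr : At → TR.Carrier
  tr_mono : ∀ {p q}, atLE p q → TR.le (tr p) (tr q)
  /-- the function `σ_o : |TR_o| → [2, κ]`. -/
  σ : TR.Carrier → Cardinal.{u}
  two_le_σ : ∀ x, 2 ≤ σ x
  σ_le_kappa : ∀ x, σ x ≤ κ
  σ_mono : ∀ {x y}, TR.le x y → σ x ≤ σ y
  /-- `A p ⊆ {tr q : q ≥ p}` … -/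
  A : At → Set TR.Carrier
  A_sub : ∀ p, ∀ x ∈ A p, ∃ q, atLE p q ∧ tr q = x
  /-- … is upward closed. -/
  A_upward : ∀ p, ∀ x ∈ A p, ∀ y, TR.le x y → y ∈ A p
  /-- clause (F): every `≤`-increasing, `σ`-truly increasing sequence of limit length `< κ`
  has a least upper bound whose trunk is the `plus` of the trunks. -/
  clauseF : ∀ δ : Ordinal.{u}, Order.IsSuccLimit δ → δ < κ.ord →
    ∀ p : Set.Iio δ → At,
      (∀ i j : Set.Iio δ, (i : Ordinal.{u}) ≤ (j : Ordinal.{u}) → atLE (p i) (p j)) →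
      (∀ i j : Set.Iio δ, (i : Ordinal.{u}) < (j : Ordinal.{u}) →
        σ (tr (p i)) < σ (tr (p j)) ∨ (σ (tr (p i)) = κ ∧ σ (tr (p j)) = κ)) →
      ∃ q, (∀ i, atLE (p i) q) ∧ (∀ r, (∀ i, atLE (p i) r) → atLE q r) ∧
        tr q = TR.plus (Set.Iio δ) fun i => tr (p i)
  /-- clause (G): conditions with σ-constant trunks, fewer than `σ` of them, whose trunks
  lie in the domain of `plus`, have a common upper bound whose trunk lies in all the `A`s. -/
  clauseG : ∀ i_star : Ordinal.{u}, 0 < i_star →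
    ∀ p : Set.Iio i_star → At, ∀ c : Cardinal.{u},
      (∀ i, σ (tr (p i)) = c) → i_star < c.ord →
      TR.plusDefined (Set.Iio i_star) (fun i => tr (p i)) →
      ∃ q, (∀ i, atLE (p i) q) ∧ ∀ i, tr q ∈ A (p i)

variable {κ : Cardinal.{u}}

/-- A condition of the derived forcing `Q_o`: a pair `(tr_p, F_p)` with `F_p` a set of atomic
conditions of size `< σ(tr_p)`, all of whose trunks are `≤ tr_p`, with `tr_p ∈ A q` for
`q ∈ F_p`. -/
def IsCond (o : Iterand.{u} κ) (p : o.TR.Carrier × Set o.At) : Prop :=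
  #p.2 < o.σ p.1 ∧ ∀ q ∈ p.2, o.TR.le (o.tr q) p.1 ∧ p.1 ∈ o.A q

/-- The order of the derived forcing `Q_o`. -/
def condLE (o : Iterand.{u} κ) (p q : o.TR.Carrier × Set o.At) : Prop :=
  o.TR.le p.1 q.1 ∧ p.2 ⊆ q.2

/-- A ZFC set is hereditarily of cardinality `< κ`, i.e. it belongs to `H(κ)`. -/
def MemHkappa (κ : Cardinal.{u}) (z : ZFSet.{u}) : Prop :=
  ZFSet.Hereditarily (fun y => #y.toSet < Cardinal.lift.{u + 1} κ) z

section AuxHkappa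

variable {κ : Cardinal.{u}}

theorem aux_isRegular (hκinf : ℵ₀ ≤ κ) (hκ : κ ^< κ = κ) : κ.IsRegular := by
  refine ⟨hκinf, ?_⟩
  by_contra h
  push_neg at h
  exact absurd ((Cardinal.lt_power_cof hκinf).trans_le
    ((Cardinal.le_powerlt κ h).trans hκ.le)) (lt_irrefl κ)

theorem aux_rank_lt_ord (hreg : κ.IsRegular) :
    ∀ z : ZFSet.{u}, MemHkappa κ z → z.rank < κ.ord := by
  intro z
  induction z using ZFSet.inductionOn with
  | _ z IH =>
  intro hz
  obtain ⟨c', hc'lt, hc'eq⟩ := Cardinal.lt_lift_iff.{u, u + 1}.mp (ZFSet.hereditarily_iff.mp hz).1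
  obtain ⟨e⟩ : Nonempty (c'.out ≃ z.toSet) := by
    apply Cardinal.lift_mk_eq'.mp
    rw [Cardinal.mk_out, hc'eq, Cardinal.lift_id'.{u, u + 1}]
  have hOrd := Cardinal.isSuccLimit_ord hreg.aleph0_le
  set g : c'.out → Ordinal.{u} := fun i => Order.succ (ZFSet.rank ((e i : z.toSet) : ZFSet.{u}))
    with hg_def
  have hg : ∀ i, g i < κ.ord := by
    intro i
    have hmem : ((e i : z.toSet) : ZFSet.{u}) ∈ z := (e i).2
    exact hOrd.succ_lt (IH _ hmem ((ZFSet.hereditarily_iff.mp hz).2 _ hmem))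
  have hsup : iSup g < κ.ord :=
    Cardinal.iSup_lt_ord_of_isRegular hreg (by rw [Cardinal.mk_out]; exact hc'lt) hg
  refine lt_of_le_of_lt ?_ hsup
  rw [ZFSet.rank_le_iff]
  intro y hy
  have h1 : ZFSet.rank y < g (e.symm ⟨y, hy⟩) := by
    show ZFSet.rank y < Order.succ (ZFSet.rank _)
    rw [Equiv.apply_symm_apply]
    exact Order.lt_succ _
  exact h1.trans_le (Ordinal.le_iSup g _)

theorem aux_mk_cardLt_le (κ : Cardinal.{u}) :
    #{c : Cardinal.{u} // c < κ} ≤ Cardinal.lift.{u + 1} κ := by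
  have hinj : Function.Injective
      (fun c : {c : Cardinal.{u} // c < κ} =>
        (⟨c.1.ord, Cardinal.ord_lt_ord.mpr c.2⟩ : Set.Iio κ.ord)) := by
    intro c c' h
    apply Subtype.ext
    have h2 : c.1.ord = c'.1.ord := congrArg Subtype.val h
    have h3 := congrArg Ordinal.card h2
    rwa [Cardinal.card_ord, Cardinal.card_ord] at h3
  refine (Cardinal.mk_le_of_injective hinj).trans ?_
  rw [Ordinal.mk_Iio_ordinal, Cardinal.card_ord]

theorem aux_mk_memHkappa_le (hκinf : ℵ₀ ≤ κ) (hreg : κ.IsRegular) (hκ : κ ^< κ = κ) :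
    #{z : ZFSet.{u} // MemHkappa κ z} ≤ Cardinal.lift.{u + 1} κ := by
  classical
  let S : Ordinal.{u} → Set ZFSet.{u} := fun α => {z | MemHkappa κ z ∧ z.rank < α}
  have main : ∀ α : Ordinal.{u}, α ≤ κ.ord → #(S α) ≤ Cardinal.lift.{u + 1} κ := by
    intro α
    induction α using Ordinal.induction with
    | _ α IH =>
    intro hα
    let Idx : Type (u + 1) := Set.Iio α × {c : Cardinal.{u} // c < κ}
    let T : Idx → Type (u + 1) := fun p =>
      {t : Set ZFSet.{u} // t ⊆ S p.1.1 ∧ #t ≤ Cardinal.lift.{u + 1} p.2.1}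
    have hmk : #(S α) ≤ #(Σ p : Idx, T p) := by
      have hcard : ∀ z : S α, ∃ c' : Cardinal.{u},
          c' < κ ∧ Cardinal.lift.{u + 1} c' = #(z.1.toSet) := by
        intro z
        obtain ⟨c', h1, h2⟩ := Cardinal.lt_lift_iff.{u, u + 1}.mp (ZFSet.hereditarily_iff.mp z.2.1).1
        exact ⟨c', h1, h2⟩
      choose cz hcz1 hcz2 using hcard
      have hsub : ∀ z : S α, z.1.toSet ⊆ S z.1.rank := by
        intro z y hy
        have hym : y ∈ z.1 := hy
        exact ⟨(ZFSet.hereditarily_iff.mp z.2.1).2 y hym, ZFSet.rank_lt_of_mem hym⟩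
      refine Cardinal.mk_le_of_injective (f := fun z : S α =>
        (⟨(⟨z.1.rank, z.2.2⟩, ⟨cz z, hcz1 z⟩),
          ⟨z.1.toSet, hsub z, le_of_eq (hcz2 z).symm⟩⟩ : Σ p : Idx, T p)) ?_
      intro z z' h
      have h2 : z.1.toSet = z'.1.toSet :=
        congrArg (fun w : Σ p : Idx, T p => (w.2.1 : Set ZFSet.{u})) h
      exact Subtype.ext (SetLike.coe_injective h2)
    have hT : ∀ p : Idx, #(T p) ≤ Cardinal.lift.{u + 1} κ := by
      intro p
      refine (Cardinal.mk_bounded_subset_le _ _).trans ?_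
      have h1 : max #(S p.1.1) ℵ₀ ≤ Cardinal.lift.{u + 1} κ :=
        max_le (IH p.1.1 p.1.2 ((p.1.2.trans_le hα).le))
          (Cardinal.aleph0_le_lift.mpr hκinf)
      calc (max #(S p.1.1) ℵ₀) ^ Cardinal.lift.{u + 1} p.2.1
          ≤ (Cardinal.lift.{u + 1} κ) ^ Cardinal.lift.{u + 1} p.2.1 :=
            Cardinal.power_le_power_right h1
        _ = Cardinal.lift.{u + 1} (κ ^ p.2.1) := (Cardinal.lift_power _ _).symm
        _ ≤ Cardinal.lift.{u + 1} (κ ^< κ) :=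
            Cardinal.lift_le.mpr (Cardinal.le_powerlt κ p.2.2)
        _ = Cardinal.lift.{u + 1} κ := by rw [hκ]
    have hIdx : #Idx ≤ Cardinal.lift.{u + 1} κ := by
      have h1 : #(Set.Iio α) ≤ Cardinal.lift.{u + 1} κ := by
        refine le_trans (Cardinal.mk_le_mk_of_subset (s := Set.Iio α) (t := Set.Iio κ.ord)
          (fun x (hx : x < α) => lt_of_lt_of_le hx hα)) ?_
        rw [Ordinal.mk_Iio_ordinal, Cardinal.card_ord]
      calc #Idx = #(Set.Iio α) * #{c : Cardinal.{u} // c < κ} := by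
            rw [Cardinal.mk_prod, Cardinal.lift_id, Cardinal.lift_id]
        _ ≤ Cardinal.lift.{u + 1} κ * Cardinal.lift.{u + 1} κ :=
            mul_le_mul' h1 (aux_mk_cardLt_le κ)
        _ = Cardinal.lift.{u + 1} κ :=
            Cardinal.mul_eq_self (Cardinal.aleph0_le_lift.mpr hκinf)
    refine hmk.trans ?_
    rw [Cardinal.mk_sigma]
    calc (Cardinal.sum fun p : Idx => #(T p))
        ≤ Cardinal.sum (fun _ : Idx => Cardinal.lift.{u + 1} κ) :=
          Cardinal.sum_le_sum _ _ hT
      _ = #Idx * Cardinal.lift.{u + 1} κ := Cardinal.sum_const' _ _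
      _ ≤ Cardinal.lift.{u + 1} κ * Cardinal.lift.{u + 1} κ := mul_le_mul_left hIdx _
      _ = Cardinal.lift.{u + 1} κ :=
          Cardinal.mul_eq_self (Cardinal.aleph0_le_lift.mpr hκinf)
  refine le_trans (Cardinal.mk_le_of_injective
    (f := fun z : {z : ZFSet.{u} // MemHkappa κ z} =>
      (⟨z.1, z.2, aux_rank_lt_ord hreg z.1 z.2⟩ : S κ.ord)) ?_) (main κ.ord le_rfl)
  intro z z' h
  have h2 := congrArg (fun w : ↥(S κ.ord) => (w.1 : ZFSet.{u})) h
  exact Subtype.ext h2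

end AuxHkappa

/-- Assume `κ = κ^{<κ}` is an infinite cardinal and `o` is an iterand
satisfying the combinatorial clauses such that every element of `|TR_o|` belongs to `H(κ)`,
and such that every condition `p ∈ Q_o` and every `μ < κ` admit an `x ≥ tr_p` with
`σ(x) > μ·|F_p|` and `x ∈ A q` for all `q ∈ F_p`.  Then for every cardinal `μ < κ` there is
a dense open subset `D` of `Q_o` which is a union `⋃_{ε<κ} Y ε` of sets such that any
`< μ` members of one `Y ε` have a common upper bound in `Q_o`. -/
theorem exists_denseOpen_union {κ : Cardinal.{u}} (hκinf : ℵ₀ ≤ κ) (hκ : κ ^< κ = κ)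
    (o : Iterand.{u} κ)
    (hH : ∃ ι : o.TR.Carrier → ZFSet.{u}, Function.Injective ι ∧ ∀ x, MemHkappa κ (ι x))
    (hext : ∀ p : o.TR.Carrier × Set o.At, IsCond o p → ∀ μ : Cardinal.{u}, μ < κ →
      ∃ x : o.TR.Carrier, o.TR.le p.1 x ∧ μ * #p.2 < o.σ x ∧ ∀ q ∈ p.2, x ∈ o.A q)
    (μ : Cardinal.{u}) (hμ : μ < κ) :
    ∃ D : Set (o.TR.Carrier × Set o.At),
      (∀ p ∈ D, IsCond o p) ∧
      (∀ p : o.TR.Carrier × Set o.At, IsCond o p → ∃ q ∈ D, condLE o p q) ∧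
      (∀ p ∈ D, ∀ q : o.TR.Carrier × Set o.At, IsCond o q → condLE o p q → q ∈ D) ∧
      ∃ Y : Ordinal.{u} → Set (o.TR.Carrier × Set o.At),
        (D = ⋃ ε ∈ Set.Iio κ.ord, Y ε) ∧
        ∀ ε : Ordinal.{u}, ∀ Z ⊆ Y ε, #Z < μ →
          ∃ r : o.TR.Carrier × Set o.At, IsCond o r ∧ ∀ p ∈ Z, condLE o p r := by
  classical
  have hreg := aux_isRegular hκinf hκ
  have hScard := aux_mk_memHkappa_le hκinf hreg hκ
  obtain ⟨ι, hιinj, hιH⟩ := hH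
  have hCar : Cardinal.lift.{u + 1} #o.TR.Carrier ≤ Cardinal.lift.{u + 1} κ := by
    refine le_trans ?_ hScard
    rw [← Cardinal.mk_uLift]
    refine Cardinal.mk_le_of_injective (f := fun x : ULift.{u + 1} o.TR.Carrier =>
      (⟨ι x.down, hιH x.down⟩ : {z : ZFSet.{u} // MemHkappa κ z})) ?_
    intro a b h
    exact ULift.down_injective (hιinj (congrArg Subtype.val h))
  -- the index type
  let Idx : Type (u + 1) := ULift.{u + 1} o.TR.Carrier × {c : Cardinal.{u} // c < κ}
  have hIdxle : #Idx ≤ #(Set.Iio κ.ord) := by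
    rw [Ordinal.mk_Iio_ordinal, Cardinal.card_ord]
    calc #Idx = #(ULift.{u + 1} o.TR.Carrier) * #{c : Cardinal.{u} // c < κ} := by
          rw [Cardinal.mk_prod, Cardinal.lift_id, Cardinal.lift_id]
      _ ≤ Cardinal.lift.{u + 1} κ * Cardinal.lift.{u + 1} κ := by
          refine mul_le_mul' ?_ (aux_mk_cardLt_le κ)
          rw [Cardinal.mk_uLift]; exact hCar
      _ = Cardinal.lift.{u + 1} κ :=
          Cardinal.mul_eq_self (Cardinal.aleph0_le_lift.mpr hκinf)
  haveI : Nonempty Idx :=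
    ⟨⟨⟨o.TR.bot⟩, ⟨0, lt_of_lt_of_le Cardinal.aleph0_pos hκinf⟩⟩⟩
  obtain ⟨emb⟩ := Cardinal.le_def _ _ |>.mp hIdxle
  let g : Set.Iio κ.ord → Idx := Function.invFun emb
  have hgsurj : Function.Surjective g := Function.invFun_surjective emb.injective
  -- the classes
  let cls : Idx → Set (o.TR.Carrier × Set o.At) := fun i =>
    {q | IsCond o q ∧ q.1 = i.1.down ∧ #q.2 ≤ i.2.1}
  let Y : Ordinal.{u} → Set (o.TR.Carrier × Set o.At) := fun ε =>
    if h : ε < κ.ord then cls (g ⟨ε, h⟩) else ∅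
  have hbotCond : IsCond o (o.TR.bot, (∅ : Set o.At)) := by
    constructor
    · rw [show #(∅ : Set o.At) = 0 from Cardinal.mk_emptyCollection _]
      refine lt_of_lt_of_le ?_ (o.two_le_σ o.TR.bot)
      norm_num
    · intro q hq
      exact absurd hq (Set.notMem_empty q)
  refine ⟨{q | IsCond o q}, fun p hp => hp,
    fun p hp => ⟨p, hp, o.isTC.le_refl _, subset_rfl⟩,
    fun _ _ q hq _ => hq, Y, ?_, ?_⟩
  · -- D = ⋃ ε < κ.ord, Y ε
    ext q
    simp only [Set.mem_setOf_eq, Set.mem_iUnion, Set.mem_Iio]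
    constructor
    · intro hq
      obtain ⟨⟨ε, hε⟩, hgε⟩ := hgsurj
        ⟨⟨q.1⟩, ⟨#q.2, lt_of_lt_of_le hq.1 (o.σ_le_kappa q.1)⟩⟩
      refine ⟨ε, hε, ?_⟩
      have hYε : Y ε = cls (g ⟨ε, hε⟩) := dif_pos hε
      rw [hYε, hgε]
      exact ⟨hq, rfl, le_rfl⟩
    · rintro ⟨ε, hε, hq⟩
      have hYε : Y ε = cls (g ⟨ε, hε⟩) := dif_pos hε
      rw [hYε] at hq
      exact hq.1
  · -- merging
    intro ε Z hZY hZμ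
    rcases Set.eq_empty_or_nonempty Z with hZe | ⟨q₀, hq₀⟩
    · exact ⟨(o.TR.bot, ∅), hbotCond, by rw [hZe]; exact fun p hp => absurd hp (Set.notMem_empty p)⟩
    · have hεlt : ε < κ.ord := by
        by_contra hc
        have hYe : Y ε = ∅ := dif_neg hc
        rw [hYe] at hZY
        exact absurd (hZY hq₀) (Set.notMem_empty _)
      have hYε : Y ε = cls (g ⟨ε, hεlt⟩) := dif_pos hεlt
      rw [hYε] at hZY
      set i : Idx := g ⟨ε, hεlt⟩ with hidef
      set x : o.TR.Carrier := i.1.down with hxdef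
      set c : Cardinal.{u} := i.2.1 with hcdef
      have hcκ : c < κ := i.2.2
      have hmem : ∀ q ∈ Z, IsCond o q ∧ q.1 = x ∧ #q.2 ≤ c := fun q hq => hZY hq
      haveI : Nonempty Z := ⟨⟨q₀, hq₀⟩⟩
      have hU : #(⋃ q ∈ Z, q.2) ≤ μ * c := by
        refine le_trans (Cardinal.mk_biUnion_le _ _) ?_
        exact mul_le_mul' hZμ.le (ciSup_le' fun q => (hmem q.1 q.2).2.2)
      by_cases hQ : ∃ q ∈ Z, q.2.Nonempty
      case neg =>
        push_neg at hQ
        refine ⟨(x, ∅), ?_, ?_⟩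
        · constructor
          · rw [show #(∅ : Set o.At) = 0 from Cardinal.mk_emptyCollection _]
            refine lt_of_lt_of_le ?_ (o.two_le_σ x)
            norm_num
          · intro s hs
            exact absurd hs (Set.notMem_empty s)
        · intro p hp
          constructor
          · rw [(hmem p hp).2.1]
            exact o.isTC.le_refl x
          · intro s hs
            rw [hQ p hp] at hs
            exact absurd hs (Set.notMem_empty s)
      case pos =>
        obtain ⟨q₁, hq₁Z, s₀, hs₀q₁⟩ := hQ
        obtain ⟨hq₁c, hq₁x, hq₁card⟩ := hmem q₁ hq₁Z
        have hν : μ * c < κ := Cardinal.mul_lt_of_lt hκinf hμ hcκ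
        obtain ⟨x', hx'le, hx'σ, hx'A⟩ := hext q₁ hq₁c (μ * c) hν
        have hxx' : o.TR.le x x' := hq₁x ▸ hx'le
        have hone : 1 ≤ #q₁.2 :=
          Cardinal.one_le_iff_ne_zero.mpr (Cardinal.mk_ne_zero_iff.mpr ⟨⟨s₀, hs₀q₁⟩⟩)
        have hUσ : #(⋃ q ∈ Z, q.2) < o.σ x' := by
          calc #(⋃ q ∈ Z, q.2) ≤ μ * c := hU
            _ = μ * c * 1 := (mul_one _).symm
            _ ≤ μ * c * #q₁.2 := mul_le_mul_right hone _
            _ < o.σ x' := hx'σ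
        refine ⟨(x', ⋃ q ∈ Z, q.2), ⟨hUσ, ?_⟩, ?_⟩
        · intro s hsU
          obtain ⟨q, hqZ, hsq⟩ : ∃ q ∈ Z, s ∈ q.2 := by
            have h := Set.mem_iUnion₂.mp hsU
            exact ⟨h.choose, h.choose_spec.1, h.choose_spec.2⟩
          obtain ⟨hqc, hqx, _⟩ := hmem q hqZ
          constructor
          · have h1 : o.TR.le (o.tr s) q.1 := (hqc.2 s hsq).1
            rw [hqx] at h1
            exact o.isTC.le_trans h1 hxx'
          · have h1 : q.1 ∈ o.A s := (hqc.2 s hsq).2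
            rw [hqx] at h1
            exact o.A_upward s x h1 x' hxx'
        · intro p hpZ
          obtain ⟨hpc, hpx, _⟩ := hmem p hpZ
          constructor
          · rw [hpx]
            exact hxx'
          · intro s hs
            exact Set.mem_biUnion hpZ hs
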